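/- For every f ∈ M̃ one has D1(f) ∈ M̃ and D2(f) ∈ M̃, and moreover ord(D1(f)) ≥ ord f + 1 and ord(D2(f)) ≥ ord f. -/

import Mathlib

/- Common setup: K = ℂ(x11,x12,x13,x21,x22,x23,s1,s2,s3) realized as the fraction
field of the polynomial ring in nine variables over ℂ.  Variable indices:
0 = x11, 1 = x12, 2 = x13, 3 = x21, 4 = x22, 5 = x23, 6 = s1, 7 = s2, 8 = s3. -/

set_option maxHeartbeats 1000000
set_option synthInstance.maxHeartbeats 400000

noncomputable section

open MvPolynomial

abbrev Kf : Type := FractionRing (MvPolynomial (Fin 9) ℂ)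

def Xv (i : Fin 9) : Kf := algebraMap (MvPolynomial (Fin 9) ℂ) Kf (MvPolynomial.X i)

def x11 : Kf := Xv 0
def x12 : Kf := Xv 1
def x13 : Kf := Xv 2
def x21 : Kf := Xv 3
def x22 : Kf := Xv 4
def x23 : Kf := Xv 5
def s1 : Kf := Xv 6
def s2 : Kf := Xv 7
def s3 : Kf := Xv 8

/-- Δ = x11·x23 − x13·x21 -/
def Δl : Kf := x11 * x23 - x13 * x21
/-- p0 = x11·x13·x22² + Δ² -/
def p0 : Kf := x11 * x13 * x22 ^ 2 + Δl ^ 2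
/-- p1 = x22·(x13·x21 + x11·x23) -/
def p1 : Kf := x22 * (x13 * x21 + x11 * x23)
/-- p2 = x21·x23 -/
def p2 : Kf := x21 * x23
/-- p = p0 − x12·p1 + x12²·p2 -/
def pp : Kf := p0 - x12 * p1 + x12 ^ 2 * p2

/-- M: the localization of ℂ[x11,x13,x21,s1,s2,s3] at the multiplicative set
generated by x11·x13·x21, viewed as a subring of K (equivalently, the
ℂ-subalgebra of K generated by the six variables and (x11·x13·x21)⁻¹). -/
def Msub : Subalgebra ℂ Kf :=
  Algebra.adjoin ℂ ({x11, x13, x21, s1, s2, s3, (x11 * x13 * x21)⁻¹} : Set Kf)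

/-- M̂: the localization of M[x22,x23] at p0, viewed as a subring of K. -/
def Mhat : Subalgebra ℂ Kf :=
  Algebra.adjoin ℂ
    ({x11, x13, x21, s1, s2, s3, (x11 * x13 * x21)⁻¹, x22, x23, p0⁻¹} : Set Kf)

/-- M̃: the localization of M̂[x12] at p, viewed as a subring of K. -/
def Mtilde : Subalgebra ℂ Kf :=
  Algebra.adjoin ℂ
    ({x11, x13, x21, s1, s2, s3, (x11 * x13 * x21)⁻¹, x22, x23, p0⁻¹, x12, pp⁻¹} : Set Kf)

/-- ord f : the largest ν ≥ 0 with f ∈ x12^ν·M̃ (and ord 0 = ∞, since 0 lies in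
every x12^ν·M̃; for f ∉ M̃ the defining set is empty and the sSup is 0). -/
def ord (f : Kf) : ℕ∞ :=
  sSup ((↑) '' {ν : ℕ | ∃ g ∈ Mtilde, f = x12 ^ ν * g})

/-- values of the derivation D1 on the nine variables, up to the common factor
(2/3)·x12: D1 = (2/3)·x12·(−x11·∂_{x11} + x13·∂_{x13} + x21·∂_{x21}
+ 2·x22·∂_{x22} + s1·∂_{s1} + 2·s2·∂_{s2}). -/
def D1vals : Fin 9 → Kf := ![-x11, 0, x13, x21, 2 * x22, 0, s1, 2 * s2, 0]

/-- values of the derivation D2 = 2(x13·x21 − x11·x23)·∂_{x22} + 2·x13·x22·∂_{x23}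
on the nine variables. -/
def D2vals : Fin 9 → Kf :=
  ![0, 0, 0, 0, 2 * (x13 * x21 - x11 * x23), 2 * x13 * x22, 0, 0, 0]

/-! ### Auxiliary lemmas -/

def genSet : Set Kf :=
  {x11, x13, x21, s1, s2, s3, (x11 * x13 * x21)⁻¹, x22, x23, p0⁻¹, x12, pp⁻¹}

lemma Mtilde_eq : Mtilde = Algebra.adjoin ℂ genSet := rfl

lemma x11_mem : x11 ∈ Mtilde := Algebra.subset_adjoin (s := genSet) (Set.mem_insert _ _)
lemma x13_mem : x13 ∈ Mtilde := Algebra.subset_adjoin (s := genSet) (Set.mem_insert_of_mem _ (Set.mem_insert _ _))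
lemma x21_mem : x21 ∈ Mtilde := Algebra.subset_adjoin (s := genSet) (Set.mem_insert_of_mem _ (Set.mem_insert_of_mem _ (Set.mem_insert _ _)))
lemma s1_mem : s1 ∈ Mtilde := Algebra.subset_adjoin (s := genSet) (Set.mem_insert_of_mem _ (Set.mem_insert_of_mem _ (Set.mem_insert_of_mem _ (Set.mem_insert _ _))))
lemma s2_mem : s2 ∈ Mtilde := Algebra.subset_adjoin (s := genSet) (Set.mem_insert_of_mem _ (Set.mem_insert_of_mem _ (Set.mem_insert_of_mem _ (Set.mem_insert_of_mem _ (Set.mem_insert _ _)))))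
lemma s3_mem : s3 ∈ Mtilde := Algebra.subset_adjoin (s := genSet) (Set.mem_insert_of_mem _ (Set.mem_insert_of_mem _ (Set.mem_insert_of_mem _ (Set.mem_insert_of_mem _ (Set.mem_insert_of_mem _ (Set.mem_insert _ _))))))
lemma u_inv_mem : (x11 * x13 * x21)⁻¹ ∈ Mtilde := Algebra.subset_adjoin (s := genSet) (Set.mem_insert_of_mem _ (Set.mem_insert_of_mem _ (Set.mem_insert_of_mem _ (Set.mem_insert_of_mem _ (Set.mem_insert_of_mem _ (Set.mem_insert_of_mem _ (Set.mem_insert _ _)))))))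
lemma x22_mem : x22 ∈ Mtilde := Algebra.subset_adjoin (s := genSet) (Set.mem_insert_of_mem _ (Set.mem_insert_of_mem _ (Set.mem_insert_of_mem _ (Set.mem_insert_of_mem _ (Set.mem_insert_of_mem _ (Set.mem_insert_of_mem _ (Set.mem_insert_of_mem _ (Set.mem_insert _ _))))))))
lemma x23_mem : x23 ∈ Mtilde := Algebra.subset_adjoin (s := genSet) (Set.mem_insert_of_mem _ (Set.mem_insert_of_mem _ (Set.mem_insert_of_mem _ (Set.mem_insert_of_mem _ (Set.mem_insert_of_mem _ (Set.mem_insert_of_mem _ (Set.mem_insert_of_mem _ (Set.mem_insert_of_mem _ (Set.mem_insert _ _)))))))))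
lemma p0_inv_mem : p0⁻¹ ∈ Mtilde := Algebra.subset_adjoin (s := genSet) (Set.mem_insert_of_mem _ (Set.mem_insert_of_mem _ (Set.mem_insert_of_mem _ (Set.mem_insert_of_mem _ (Set.mem_insert_of_mem _ (Set.mem_insert_of_mem _ (Set.mem_insert_of_mem _ (Set.mem_insert_of_mem _ (Set.mem_insert_of_mem _ (Set.mem_insert _ _))))))))))
lemma x12_mem : x12 ∈ Mtilde := Algebra.subset_adjoin (s := genSet) (Set.mem_insert_of_mem _ (Set.mem_insert_of_mem _ (Set.mem_insert_of_mem _ (Set.mem_insert_of_mem _ (Set.mem_insert_of_mem _ (Set.mem_insert_of_mem _ (Set.mem_insert_of_mem _ (Set.mem_insert_of_mem _ (Set.mem_insert_of_mem _ (Set.mem_insert_of_mem _ (Set.mem_insert _ _)))))))))))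
lemma pp_inv_mem : pp⁻¹ ∈ Mtilde := Algebra.subset_adjoin (s := genSet) (Set.mem_insert_of_mem _ (Set.mem_insert_of_mem _ (Set.mem_insert_of_mem _ (Set.mem_insert_of_mem _ (Set.mem_insert_of_mem _ (Set.mem_insert_of_mem _ (Set.mem_insert_of_mem _ (Set.mem_insert_of_mem _ (Set.mem_insert_of_mem _ (Set.mem_insert_of_mem _ (Set.mem_insert_of_mem _ (Set.mem_singleton _))))))))))))

lemma two_thirds_mem : (2 / 3 : Kf) ∈ Mtilde := by
  have h : (2 / 3 : Kf) = algebraMap ℂ Kf (2 / 3) := by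
    rw [map_div₀, map_ofNat, map_ofNat]
  rw [h]
  exact Subalgebra.algebraMap_mem _ _

lemma two_mem : (2 : Kf) ∈ Mtilde := by
  have h : (2 : Kf) = algebraMap ℂ Kf 2 := by rw [map_ofNat]
  rw [h]; exact Subalgebra.algebraMap_mem _ _

lemma D1vals_mem : ∀ i, D1vals i ∈ Mtilde := by
  intro i
  fin_cases i <;> simp only [D1vals, Matrix.cons_val_zero, Matrix.cons_val_one,
    Matrix.head_cons, Matrix.cons_val_succ, Fin.isValue]
  · exact neg_mem x11_mem
  · exact zero_mem _
  · exact x13_mem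
  · exact x21_mem
  · exact mul_mem two_mem x22_mem
  · exact zero_mem _
  · exact s1_mem
  · exact mul_mem two_mem s2_mem
  · exact zero_mem _

lemma D2vals_mem : ∀ i, D2vals i ∈ Mtilde := by
  intro i
  fin_cases i <;> simp only [D2vals, Matrix.cons_val_zero, Matrix.cons_val_one,
    Matrix.head_cons, Matrix.cons_val_succ, Fin.isValue]
  · exact zero_mem _
  · exact zero_mem _
  · exact zero_mem _
  · exact zero_mem _
  · exact mul_mem two_mem (sub_mem (mul_mem x13_mem x21_mem) (mul_mem x11_mem x23_mem))
  · exact mul_mem (mul_mem two_mem x13_mem) x22_mem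
  · exact zero_mem _
  · exact zero_mem _
  · exact zero_mem _

lemma p0_mem : p0 ∈ Mtilde := by
  rw [p0, Δl]
  exact add_mem (mul_mem (mul_mem x11_mem x13_mem) (pow_mem x22_mem 2))
    (pow_mem (sub_mem (mul_mem x11_mem x23_mem) (mul_mem x13_mem x21_mem)) 2)

lemma p1_mem : p1 ∈ Mtilde := by
  rw [p1]
  exact mul_mem x22_mem (add_mem (mul_mem x13_mem x21_mem) (mul_mem x11_mem x23_mem))

lemma p2_mem : p2 ∈ Mtilde := by rw [p2]; exact mul_mem x21_mem x23_mem

section Master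

variable (D : Derivation ℂ Kf Kf) (c : Kf)

/-- the property `D y = c * h` for some `h ∈ M̃`. -/
def GP (y : Kf) : Prop := ∃ h ∈ Mtilde, D y = c * h

lemma gp_add {a b : Kf} (ha : GP D c a) (hb : GP D c b) : GP D c (a + b) := by
  obtain ⟨h1, h1m, e1⟩ := ha; obtain ⟨h2, h2m, e2⟩ := hb
  exact ⟨h1 + h2, add_mem h1m h2m, by rw [map_add, e1, e2]; ring⟩

lemma gp_mul {a b : Kf} (ham : a ∈ Mtilde) (hbm : b ∈ Mtilde)
    (ha : GP D c a) (hb : GP D c b) : GP D c (a * b) := by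
  obtain ⟨h1, h1m, e1⟩ := ha; obtain ⟨h2, h2m, e2⟩ := hb
  exact ⟨a * h2 + b * h1, add_mem (mul_mem ham h2m) (mul_mem hbm h1m), by
    rw [D.leibniz, smul_eq_mul, smul_eq_mul, e1, e2]; ring⟩

lemma gp_sub {a b : Kf} (ha : GP D c a) (hb : GP D c b) : GP D c (a - b) := by
  obtain ⟨h1, h1m, e1⟩ := ha; obtain ⟨h2, h2m, e2⟩ := hb
  exact ⟨h1 - h2, sub_mem h1m h2m, by rw [map_sub, e1, e2]; ring⟩

lemma gp_sq {a : Kf} (ham : a ∈ Mtilde) (ha : GP D c a) : GP D c (a ^ 2) := by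
  rw [sq]; exact gp_mul D c ham ham ha ha

lemma gp_inv {a : Kf} (hinv : a⁻¹ ∈ Mtilde) (ha : GP D c a) : GP D c a⁻¹ := by
  obtain ⟨h, hm, e⟩ := ha
  exact ⟨-a⁻¹ ^ 2 * h, mul_mem (neg_mem (pow_mem hinv 2)) hm, by
    rw [D.leibniz_inv, smul_eq_mul, e]; ring⟩

variable (hvals : ∀ i, GP D c (Xv i))

include hvals

lemma gp_x11 : GP D c x11 := hvals 0
lemma gp_x12 : GP D c x12 := hvals 1
lemma gp_x13 : GP D c x13 := hvals 2
lemma gp_x21 : GP D c x21 := hvals 3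
lemma gp_x22 : GP D c x22 := hvals 4
lemma gp_x23 : GP D c x23 := hvals 5

lemma gp_p0 : GP D c p0 := by
  rw [p0, Δl]
  exact gp_add D c
    (gp_mul D c (mul_mem x11_mem x13_mem) (pow_mem x22_mem 2)
      (gp_mul D c x11_mem x13_mem (gp_x11 D c hvals) (gp_x13 D c hvals))
      (gp_sq D c x22_mem (gp_x22 D c hvals)))
    (gp_sq D c (sub_mem (mul_mem x11_mem x23_mem) (mul_mem x13_mem x21_mem))
      (gp_sub D c (gp_mul D c x11_mem x23_mem (gp_x11 D c hvals) (gp_x23 D c hvals))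
        (gp_mul D c x13_mem x21_mem (gp_x13 D c hvals) (gp_x21 D c hvals))))

lemma gp_p1 : GP D c p1 := by
  rw [p1]
  exact gp_mul D c x22_mem (add_mem (mul_mem x13_mem x21_mem) (mul_mem x11_mem x23_mem))
    (gp_x22 D c hvals)
    (gp_add D c (gp_mul D c x13_mem x21_mem (gp_x13 D c hvals) (gp_x21 D c hvals))
      (gp_mul D c x11_mem x23_mem (gp_x11 D c hvals) (gp_x23 D c hvals)))

lemma gp_p2 : GP D c p2 := by
  rw [p2]
  exact gp_mul D c x21_mem x23_mem (gp_x21 D c hvals) (gp_x23 D c hvals)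

lemma gp_pp : GP D c pp := by
  rw [pp]
  exact gp_add D c
    (gp_sub D c (gp_p0 D c hvals)
      (gp_mul D c x12_mem p1_mem (gp_x12 D c hvals) (gp_p1 D c hvals)))
    (gp_mul D c (pow_mem x12_mem 2) p2_mem (gp_sq D c x12_mem (gp_x12 D c hvals))
      (gp_p2 D c hvals))

lemma gp_gens : ∀ y ∈ genSet, GP D c y := by
  intro y hy
  simp only [genSet, Set.mem_insert_iff, Set.mem_singleton_iff] at hy
  rcases hy with rfl | rfl | rfl | rfl | rfl | rfl | rfl | rfl | rfl | rfl | rfl | rfl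
  · exact gp_x11 D c hvals
  · exact gp_x13 D c hvals
  · exact gp_x21 D c hvals
  · exact hvals 6
  · exact hvals 7
  · exact hvals 8
  · exact gp_inv D c u_inv_mem
      (gp_mul D c (mul_mem x11_mem x13_mem) x21_mem
        (gp_mul D c x11_mem x13_mem (gp_x11 D c hvals) (gp_x13 D c hvals))
        (gp_x21 D c hvals))
  · exact gp_x22 D c hvals
  · exact gp_x23 D c hvals
  · exact gp_inv D c p0_inv_mem (gp_p0 D c hvals)
  · exact gp_x12 D c hvals
  · exact gp_inv D c pp_inv_mem (gp_pp D c hvals)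

lemma master : ∀ f ∈ Mtilde, GP D c f := by
  intro f hf
  rw [Mtilde_eq] at hf
  induction hf using Algebra.adjoin_induction with
  | mem y hy => exact gp_gens D c hvals y hy
  | algebraMap r => exact ⟨0, zero_mem _, by simp⟩
  | add a b ha hb pa pb => exact gp_add D c pa pb
  | mul a b ha hb pa pb => exact gp_mul D c ha hb pa pb

end Master

lemma D_pow_mul (D : Derivation ℂ Kf Kf) (hx : D x12 = 0) (ν : ℕ) (g : Kf) :
    D (x12 ^ ν * g) = x12 ^ ν * D g := by
  rw [D.leibniz, D.leibniz_pow, hx]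
  simp [smul_eq_mul]

/-- key `ℕ∞` lemma for the `+1` estimate. -/
lemma ord_succ_le {f F : Kf} (hf : f ∈ Mtilde)
    (hstep : ∀ ν : ℕ, (∃ g ∈ Mtilde, f = x12 ^ ν * g) →
      (∃ g ∈ Mtilde, F = x12 ^ (ν + 1) * g)) :
    ord f + 1 ≤ ord F := by
  set S : Set ℕ := {ν : ℕ | ∃ g ∈ Mtilde, f = x12 ^ ν * g} with hSdef
  set T : Set ℕ := {ν : ℕ | ∃ g ∈ Mtilde, F = x12 ^ ν * g} with hTdef
  have hS0 : (0 : ℕ) ∈ S := ⟨f, hf, by simp⟩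
  have hof : ord f = sSup ((↑) '' S) := rfl
  have hoF : ord F = sSup ((↑) '' T) := rfl
  by_cases hb : BddAbove S
  · have hm : sSup S ∈ S := Nat.sSup_mem ⟨0, hS0⟩ hb
    have h1 : ord f ≤ ((sSup S : ℕ) : ℕ∞) := by
      rw [hof]
      apply sSup_le
      rintro a ⟨ν, hν, rfl⟩
      exact_mod_cast le_csSup hb hν
    have h2 : ((sSup S : ℕ) : ℕ∞) + 1 ≤ ord F := by
      have hmem : ((sSup S + 1 : ℕ) : ℕ∞) ∈ ((↑) '' T : Set ℕ∞) :=
        ⟨sSup S + 1, hstep _ hm, rfl⟩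
      have h3 := le_sSup hmem
      rw [hoF]
      exact_mod_cast h3
    calc ord f + 1 ≤ ((sSup S : ℕ) : ℕ∞) + 1 := add_le_add_left h1 1
      _ ≤ ord F := h2
  · have htop : ord F = ⊤ := by
      rw [hoF, sSup_eq_top]
      intro b hbt
      lift b to ℕ using hbt.ne
      obtain ⟨ν, hν, hlt⟩ := not_bddAbove_iff.mp hb b
      exact ⟨((ν + 1 : ℕ) : ℕ∞), ⟨ν + 1, hstep ν hν, rfl⟩, by
        exact_mod_cast hlt.trans_le (Nat.le_succ ν)⟩
    rw [htop]
    exact le_top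

lemma ord_mono {f F : Kf}
    (hstep : ∀ ν : ℕ, (∃ g ∈ Mtilde, f = x12 ^ ν * g) →
      (∃ g ∈ Mtilde, F = x12 ^ ν * g)) :
    ord f ≤ ord F :=
  sSup_le_sSup (Set.image_mono (fun ν hν => hstep ν hν))

/-- for every f ∈ M̃, D1(f), D2(f) ∈ M̃, ord(D1 f) ≥ ord f + 1 and
ord(D2 f) ≥ ord f. -/
theorem statement_2 (D1 D2 : Derivation ℂ Kf Kf)
    (hD1 : ∀ i, D1 (Xv i) = (2 / 3 : Kf) * x12 * D1vals i)
    (hD2 : ∀ i, D2 (Xv i) = D2vals i)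
    (f : Kf) (hf : f ∈ Mtilde) :
    (D1 f ∈ Mtilde ∧ D2 f ∈ Mtilde) ∧
      ord f + 1 ≤ ord (D1 f) ∧ ord f ≤ ord (D2 f) := by
  have hv1 : ∀ i, GP D1 x12 (Xv i) := fun i =>
    ⟨(2 / 3 : Kf) * D1vals i, mul_mem two_thirds_mem (D1vals_mem i), by rw [hD1 i]; ring⟩
  have hv2 : ∀ i, GP D2 1 (Xv i) := fun i =>
    ⟨D2vals i, D2vals_mem i, by rw [hD2 i, one_mul]⟩
  have hx12_1 : D1 x12 = 0 := by
    have h := hD1 1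
    simp only [D1vals, Matrix.cons_val_one, Matrix.head_cons, Matrix.cons_val_zero, mul_zero] at h
    exact h
  have hx12_2 : D2 x12 = 0 := by
    have h := hD2 1
    simp only [D2vals, Matrix.cons_val_one, Matrix.head_cons, Matrix.cons_val_zero] at h
    exact h
  have m1 := master D1 x12 hv1
  have m2 := master D2 1 hv2
  obtain ⟨h1, h1m, e1⟩ := m1 f hf
  obtain ⟨h2, h2m, e2⟩ := m2 f hf
  refine ⟨⟨?_, ?_⟩, ?_, ?_⟩
  · rw [e1]; exact mul_mem x12_mem h1m
  · rw [e2, one_mul]; exact h2m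
  · apply ord_succ_le hf
    rintro ν ⟨g, hg, rfl⟩
    obtain ⟨h, hm, e⟩ := m1 g hg
    exact ⟨h, hm, by rw [D_pow_mul D1 hx12_1, e, pow_succ]; ring⟩
  · apply ord_mono
    rintro ν ⟨g, hg, rfl⟩
    obtain ⟨h, hm, e⟩ := m2 g hg
    exact ⟨h, hm, by rw [D_pow_mul D2 hx12_2, e, one_mul]⟩
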